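/- arXiv:1908.01941 — 2 statements merged into one kernel-verified Lean document; each statement's English description precedes it below -/
import Mathlib

section
/- If F : [0,∞) → [0,∞) is increasing and continuous with F > 0 on (0,∞), and y : [0,T] → [0,∞) is absolutely continuous and satisfies y(t) y'(t) ≤ F(y(t)) for almost every t, and y(0) ≤ B, then for all t ∈ [0, min(T, ∫_B^{2B+1} s/F(s) ds)] one has y(t) ≤ 2B + 1. -/
set_option maxHeartbeats 1000000


open MeasureTheory Set Filter Topology

private lemma stmt0_aux (Δ A Cc p q r : ℝ) (hΔ : 0 < Δ) (hA : 0 ≤ A) (hAC : A ≤ Cc)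
    (hr : 0 < r) (hrp : r ≤ p) (hpq : p ≤ q) :
    Δ * ((A + Δ) / p) - Δ * (A / q) ≤ Δ * Δ / r + (Δ * Cc) * (1/p - 1/q) := by
  have hp : 0 < p := hr.trans_le hrp
  have hq : 0 < q := hp.trans_le hpq
  have h1 : 1/q ≤ 1/p := one_div_le_one_div_of_le hp hpq
  have h2 : 1/p ≤ 1/r := one_div_le_one_div_of_le hr hrp
  have e1 : Δ * ((A + Δ) / p) - Δ * (A / q) = Δ * Δ * (1/p) + (Δ * A) * (1/p - 1/q) := by
    field_simp
    ring
  have e2 : Δ * Δ / r = Δ * Δ * (1/r) := by ring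
  rw [e1, e2]
  have t1 : Δ * Δ * (1/p) ≤ Δ * Δ * (1/r) :=
    mul_le_mul_of_nonneg_left h2 (by positivity)
  have hpq' : 0 ≤ 1/p - 1/q := by linarith
  have hAC' : Δ * A ≤ Δ * Cc := mul_le_mul_of_nonneg_left hAC hΔ.le
  have t2 : (Δ * A) * (1/p - 1/q) ≤ (Δ * Cc) * (1/p - 1/q) :=
    mul_le_mul_of_nonneg_right hAC' hpq'
  linarith

/-- ODE comparison lemma: if `y y' ≤ F(y)` a.e., `y(0) ≤ B`, then `y ≤ 2B+1`
up to time `min T (∫_B^{2B+1} s/F(s) ds)`. -/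
theorem stmt_0 (F : ℝ → ℝ) (hF_mono : MonotoneOn F (Ici 0))
    (hF_cont : ContinuousOn F (Ici 0))
    (hF_nonneg : ∀ s, 0 ≤ s → 0 ≤ F s) (hF_pos : ∀ s, 0 < s → 0 < F s)
    (T B : ℝ) (hT : 0 < T) (hB : 0 ≤ B)
    (y y' : ℝ → ℝ) (hy_nonneg : ∀ t ∈ Icc 0 T, 0 ≤ y t)
    (hy'_int : IntervalIntegrable y' volume 0 T)
    (hy_ftc : ∀ t ∈ Icc 0 T, y t = y 0 + ∫ s in (0:ℝ)..t, y' s)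
    (hode : ∀ᵐ t ∂(volume : Measure ℝ), t ∈ Icc 0 T → y t * y' t ≤ F (y t))
    (hy0 : y 0 ≤ B) :
    ∀ t ∈ Icc 0 (min T (∫ s in B..(2*B+1), s / F s)), y t ≤ 2*B + 1 := by
  intro t ht
  set C : ℝ := 2*B+1 with hCdef
  have hBC : B < C := by rw [hCdef]; linarith
  have hC0 : (0:ℝ) < C := by rw [hCdef]; linarith
  by_contra hcon
  push_neg at hcon
  obtain ⟨ht0, htmin⟩ := ht
  have htT : t ≤ T := htmin.trans (min_le_left _ _)
  have htI : t ≤ ∫ s in B..C, s / F s := htmin.trans (min_le_right _ _)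
  -- trivial case: integrand not interval integrable
  by_cases hg : IntervalIntegrable (fun s => s / F s) volume B C
  swap
  · have hI0 : (∫ s in B..C, s / F s) = 0 := intervalIntegral.integral_undef hg
    have ht00 : t = 0 := le_antisymm (by rw [hI0] at htI; exact htI) ht0
    rw [ht00] at hcon
    have : y 0 ≤ C := hy0.trans hBC.le
    linarith
  -- continuity of y on [0, T]
  have hy_cont : ContinuousOn y (Icc 0 T) := by
    have hint : IntegrableOn y' (uIcc 0 T) volume := by
      rw [uIcc_of_le hT.le, integrableOn_Icc_iff_integrableOn_Ioc]
      exact (intervalIntegrable_iff_integrableOn_Ioc_of_le hT.le).mp hy'_int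
    have h2 := intervalIntegral.continuousOn_primitive_interval (a := (0:ℝ)) (b := T) hint
    rw [uIcc_of_le hT.le] at h2
    exact (continuousOn_const.add h2).congr hy_ftc
  -- integrability of y' on subintervals
  have hy'sub : ∀ a b : ℝ, 0 ≤ a → a ≤ T → 0 ≤ b → b ≤ T →
      IntervalIntegrable y' volume a b := by
    intro a b ha haT hb hbT
    refine hy'_int.mono_set (uIcc_subset_uIcc ?_ ?_) <;>
      rw [uIcc_of_le hT.le]
    exacts [⟨ha, haT⟩, ⟨hb, hbT⟩]
  -- increments via FTC
  have hincr : ∀ a b : ℝ, 0 ≤ a → a ≤ b → b ≤ T → y b - y a = ∫ u in a..b, y' u := by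
    intro a b ha hab hbT
    rw [hy_ftc b ⟨ha.trans hab, hbT⟩, hy_ftc a ⟨ha, hab.trans hbT⟩]
    have h1 : IntervalIntegrable y' volume 0 b :=
      hy'sub 0 b le_rfl hT.le (ha.trans hab) hbT
    have h2 : IntervalIntegrable y' volume 0 a :=
      hy'sub 0 a le_rfl hT.le ha (hab.trans hbT)
    have h3 := intervalIntegral.integral_interval_sub_left h1 h2
    linarith [h3]
  -- speed bound
  have hspeed : ∀ a b c d : ℝ, 0 ≤ a → a ≤ b → b ≤ T → 0 < c → 0 ≤ d →
      (∀ u, a < u → u ≤ b → c ≤ y u) → (∀ u, a < u → u < b → y u ≤ d) →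
      y b - y a ≤ (b - a) * (F d / c) := by
    intro a b c d ha hab hbT hc hd hlow hupp
    rw [hincr a b ha hab hbT]
    have hconst : IntervalIntegrable (fun _ => F d / c) volume a b :=
      intervalIntegrable_const
    have hy'ab : IntervalIntegrable y' volume a b :=
      hy'sub a b ha (hab.trans hbT) (ha.trans hab) hbT
    have hae : y' ≤ᵐ[volume.restrict (Icc a b)] fun _ => F d / c := by
      have hres : volume.restrict (Icc a b) = volume.restrict (Ioo a b) :=
        (Measure.restrict_congr_set Ioo_ae_eq_Icc).symm
      rw [hres]
      have hmem : ∀ᵐ u ∂volume.restrict (Ioo a b), u ∈ Ioo a b :=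
        ae_restrict_mem measurableSet_Ioo
      have hode' : ∀ᵐ u ∂volume.restrict (Ioo a b), u ∈ Icc 0 T → y u * y' u ≤ F (y u) :=
        ae_restrict_of_ae hode
      filter_upwards [hmem, hode'] with u hu hou
      have huT : u ∈ Icc 0 T := ⟨ha.trans hu.1.le, hu.2.le.trans hbT⟩
      have h1 : c ≤ y u := hlow u hu.1 hu.2.le
      have h2 : y u ≤ d := hupp u hu.1 hu.2
      have h3 : y u * y' u ≤ F d :=
        (hou huT).trans (hF_mono (hy_nonneg u huT) hd h2)
      rcases le_or_gt (y' u) 0 with h | h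
      · exact h.trans (div_nonneg (hF_nonneg d hd) hc.le)
      · rw [le_div_iff₀ hc]
        nlinarith
    calc (∫ u in a..b, y' u) ≤ ∫ _u in a..b, F d / c :=
          intervalIntegral.integral_mono_ae_restrict hab hy'ab hconst hae
    _ = (b - a) * (F d / c) := by
          rw [intervalIntegral.integral_const, smul_eq_mul]
  -- first hitting time of C
  have hyt_cont : ContinuousOn y (Icc 0 t) := hy_cont.mono (Icc_subset_Icc le_rfl htT)
  have hy0C : y 0 ≤ C := hy0.trans hBC.le
  obtain ⟨u₀, hu₀mem, hu₀⟩ : ∃ u ∈ Icc 0 t, y u = C :=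
    intermediate_value_Icc ht0 hyt_cont ⟨hy0C, hcon.le⟩
  set S2 : Set ℝ := Icc 0 t ∩ y ⁻¹' {C} with hS2
  have hS2closed : IsClosed S2 :=
    hyt_cont.preimage_isClosed_of_isClosed isClosed_Icc isClosed_singleton
  have hS2ne : S2.Nonempty := ⟨u₀, hu₀mem, hu₀⟩
  have hS2bdd : BddBelow S2 := ⟨0, fun x hx => hx.1.1⟩
  set t₂ : ℝ := sInf S2 with ht₂def
  have ht₂mem : t₂ ∈ S2 := hS2closed.csInf_mem hS2ne hS2bdd
  obtain ⟨⟨ht₂0, ht₂t⟩, ht₂C'⟩ := ht₂mem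
  have ht₂C : y t₂ = C := ht₂C'
  have ht₂T : t₂ ≤ T := ht₂t.trans htT
  have ht₂cont : ContinuousOn y (Icc 0 t₂) := hy_cont.mono (Icc_subset_Icc le_rfl ht₂T)
  have hltC : ∀ u, u ∈ Icc 0 t₂ → u < t₂ → y u < C := by
    intro u hu hut
    by_contra h
    push_neg at h
    obtain ⟨v, hvmem, hv⟩ : ∃ v ∈ Icc 0 u, y v = C :=
      intermediate_value_Icc hu.1 (ht₂cont.mono (Icc_subset_Icc le_rfl hu.2)) ⟨hy0C, h⟩
    have hvS2 : v ∈ S2 := ⟨⟨hvmem.1, hvmem.2.trans (hut.le.trans ht₂t)⟩, hv⟩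
    have := csInf_le hS2bdd hvS2
    rw [← ht₂def] at this
    have : t₂ ≤ u := this.trans hvmem.2
    exact absurd hut (not_lt.mpr this)
  have ht₂I : t₂ < ∫ s in B..C, s / F s := by
    rcases eq_or_lt_of_le ht₂t with h | h
    · exfalso; rw [h] at ht₂C; rw [ht₂C] at hcon; exact lt_irrefl _ hcon
    · exact h.trans_le htI
  set ε : ℝ := (∫ s in B..C, s / F s) - t₂ with hεdef
  have hε : 0 < ε := by rw [hεdef]; linarith
  -- choose B' close to B
  have hprim : ContinuousWithinAt (fun x => ∫ s in B..x, s / F s) (Icc B C) B := by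
    apply intervalIntegral.continuousWithinAt_primitive (measure_singleton B)
    rw [min_self, max_eq_right hBC.le]
    exact hg
  have hIccmem : Icc B C ∈ 𝓝[>] B :=
    Filter.mem_of_superset (Ioo_mem_nhdsGT hBC) Ioo_subset_Icc_self
  have htend : Filter.Tendsto (fun x => ∫ s in B..x, s / F s) (𝓝[>] B) (𝓝 0) := by
    have h1 := hprim.tendsto
    rw [intervalIntegral.integral_same] at h1
    exact h1.mono_left (nhdsWithin_le_of_mem hIccmem)
  have hev : ∀ᶠ x in 𝓝[>] B, (∫ s in B..x, s / F s) < ε/2 :=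
    htend.eventually_lt_const (by linarith)
  have hev2 : ∀ᶠ x in 𝓝[>] B, x ∈ Ioo B C := Ioo_mem_nhdsGT hBC
  obtain ⟨B', hB'small, hB'mem⟩ := (hev.and hev2).exists
  have hB'pos : 0 < B' := lt_of_le_of_lt hB hB'mem.1
  have hFB' : 0 < F B' := hF_pos _ hB'pos
  have hgsub : ∀ a b : ℝ, a ∈ Icc B C → b ∈ Icc B C →
      IntervalIntegrable (fun s => s / F s) volume a b := by
    intro a b ha hb
    refine hg.mono_set (uIcc_subset_uIcc ?_ ?_) <;>
      rw [uIcc_of_le hBC.le]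
    exacts [ha, hb]
  set I' : ℝ := ∫ s in B'..C, s / F s with hI'def
  have hsplit : (∫ s in B..B', s / F s) + I' = ∫ s in B..C, s / F s := by
    rw [hI'def]
    exact intervalIntegral.integral_add_adjacent_intervals
      (hgsub B B' ⟨le_rfl, hBC.le⟩ ⟨hB'mem.1.le, hB'mem.2.le⟩)
      (hgsub B' C ⟨hB'mem.1.le, hB'mem.2.le⟩ ⟨hBC.le, le_rfl⟩)
  have ht₂I' : t₂ < I' := by
    have : I' = (∫ s in B..C, s / F s) - (∫ s in B..B', s / F s) := by linarith
    rw [this]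
    have h2 : (∫ s in B..B', s / F s) < ε/2 := hB'small
    rw [hεdef] at *
    linarith
  -- choose the number of levels
  set K : ℝ := 2*C/F B' with hKdef
  have hKpos : 0 < K := by rw [hKdef]; positivity
  obtain ⟨n, hn⟩ := exists_nat_gt ((C - B') * K / (I' - t₂))
  have hnum : 0 < (C - B') * K := by
    have : 0 < C - B' := by linarith [hB'mem.2]
    positivity
  have hnpos : 0 < (n:ℝ) :=
    lt_trans (div_pos hnum (by linarith [ht₂I'])) hn
  set Δ : ℝ := (C - B')/n with hΔdef
  have hCB' : 0 < C - B' := by linarith [hB'mem.2]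
  have hΔpos : 0 < Δ := div_pos hCB' hnpos
  have hΔK : Δ * K < I' - t₂ := by
    have h1 : (C - B') * K < ((I' - t₂)) * n := by
      rw [div_lt_iff₀ (by linarith : (0:ℝ) < I' - t₂)] at hn
      linarith
    rw [hΔdef, div_mul_eq_mul_div, div_lt_iff₀ hnpos]
    linarith
  -- the levels
  set a : ℕ → ℝ := fun i => B' + i * Δ with hadef
  have ha0 : a 0 = B' := by simp [hadef]
  have han : a n = C := by
    rw [hadef]
    simp only []
    rw [hΔdef]
    field_simp
    ring
  have hastep : ∀ i : ℕ, a (i+1) - a i = Δ := by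
    intro i; rw [hadef]; simp only []; push_cast; ring
  have haB' : ∀ i : ℕ, B' ≤ a i := by
    intro i; rw [hadef]; simp only []
    have : 0 ≤ (i:ℝ) * Δ := by positivity
    linarith
  have hamono : ∀ i j : ℕ, i ≤ j → a i ≤ a j := by
    intro i j hij; rw [hadef]; simp only []
    have : (i:ℝ) ≤ j := by exact_mod_cast hij
    nlinarith
  have haC : ∀ i : ℕ, i ≤ n → a i ≤ C := by
    intro i hi; rw [← han]; exact hamono i n hi
  have hapos : ∀ i : ℕ, 0 < a i := fun i => hB'pos.trans_le (haB' i)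
  have haF : ∀ i : ℕ, 0 < F (a i) := fun i => hF_pos _ (hapos i)
  have haIcc : ∀ i : ℕ, i ≤ n → a i ∈ Icc B C :=
    fun i hi => ⟨hB'mem.1.le.trans (haB' i), haC i hi⟩
  have hy0a : ∀ i : ℕ, y 0 ≤ a i := fun i =>
    hy0.trans (hB'mem.1.le.trans (haB' i))
  -- hitting times ρ
  set ρ : ℕ → ℝ := fun i => sInf (Icc 0 t₂ ∩ y ⁻¹' Ici (a i)) with hρdef
  have hρbdd : ∀ i : ℕ, BddBelow (Icc 0 t₂ ∩ y ⁻¹' Ici (a i)) :=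
    fun i => ⟨0, fun x hx => hx.1.1⟩
  have hρne : ∀ i : ℕ, i ≤ n → (Icc 0 t₂ ∩ y ⁻¹' Ici (a i)).Nonempty := by
    intro i hi
    refine ⟨t₂, ⟨ht₂0, le_rfl⟩, ?_⟩
    show a i ≤ y t₂
    rw [ht₂C]; exact haC i hi
  have hρmem : ∀ i : ℕ, i ≤ n → ρ i ∈ Icc 0 t₂ ∩ y ⁻¹' Ici (a i) := by
    intro i hi
    exact (ht₂cont.preimage_isClosed_of_isClosed isClosed_Icc isClosed_Ici).csInf_mem
      (hρne i hi) (hρbdd i)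
  have hρle : ∀ i : ℕ, ∀ u ∈ Icc 0 t₂, a i ≤ y u → ρ i ≤ u :=
    fun i u hu hau => csInf_le (hρbdd i) ⟨hu, hau⟩
  have hρless : ∀ i : ℕ, ∀ u ∈ Icc 0 t₂, u < ρ i → y u < a i := by
    intro i u hu hult
    by_contra h
    push_neg at h
    exact absurd hult (not_lt.mpr (hρle i u hu h))
  have hρmono : ∀ i j : ℕ, i ≤ j → j ≤ n → ρ i ≤ ρ j := by
    intro i j hij hj
    refine le_csInf (hρne j hj) ?_
    intro u hu
    exact hρle i u hu.1 ((hamono i j hij).trans hu.2)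
  have hρval : ∀ i : ℕ, i ≤ n → y (ρ i) = a i := by
    intro i hi
    obtain ⟨⟨h0, hle⟩, hge⟩ := hρmem i hi
    obtain ⟨v, hvmem, hv⟩ : ∃ v ∈ Icc 0 (ρ i), y v = a i :=
      intermediate_value_Icc h0 (ht₂cont.mono (Icc_subset_Icc le_rfl hle))
        ⟨hy0a i, hge⟩
    have hvρ : ρ i ≤ v := hρle i v ⟨hvmem.1, hvmem.2.trans hle⟩ hv.ge
    rw [← le_antisymm hvmem.2 hvρ]
    exact hv
  -- last exit times σ
  set σ : ℕ → ℝ := fun i => sSup (Icc 0 (ρ (i+1)) ∩ y ⁻¹' Iic (a i)) with hσdef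
  have hσbdd : ∀ i : ℕ, BddAbove (Icc 0 (ρ (i+1)) ∩ y ⁻¹' Iic (a i)) :=
    fun i => ⟨ρ (i+1), fun x hx => hx.1.2⟩
  have hσne : ∀ i : ℕ, i + 1 ≤ n → (Icc 0 (ρ (i+1)) ∩ y ⁻¹' Iic (a i)).Nonempty := by
    intro i hi
    exact ⟨0, ⟨le_rfl, (hρmem (i+1) hi).1.1⟩, hy0a i⟩
  have hσmem : ∀ i : ℕ, i + 1 ≤ n → σ i ∈ Icc 0 (ρ (i+1)) ∩ y ⁻¹' Iic (a i) := by
    intro i hi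
    have hρt₂' : ρ (i+1) ≤ t₂ := (hρmem (i+1) hi).1.2
    exact ((ht₂cont.mono (Icc_subset_Icc le_rfl hρt₂')).preimage_isClosed_of_isClosed
      isClosed_Icc isClosed_Iic).csSup_mem (hσne i hi) (hσbdd i)
  have hσge : ∀ i : ℕ, ∀ u ∈ Icc 0 (ρ (i+1)), y u ≤ a i → u ≤ σ i :=
    fun i u hu hy => le_csSup (hσbdd i) ⟨hu, hy⟩
  have hσlow : ∀ i : ℕ, i + 1 ≤ n → ∀ u, σ i < u → u ≤ ρ (i+1) → a i < y u := by
    intro i hi u h1 h2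
    by_contra h
    push_neg at h
    have h0u : 0 ≤ u := le_trans (hσmem i hi).1.1 h1.le
    exact absurd h1 (not_lt.mpr (hσge i u ⟨h0u, h2⟩ h))
  have hρσ : ∀ i : ℕ, i + 2 ≤ n → ρ (i+1) ≤ σ (i+1) := by
    intro i hi
    refine hσge (i+1) (ρ (i+1))
      ⟨(hρmem (i+1) (by omega)).1.1, hρmono (i+1) (i+2) (by omega) hi⟩ ?_
    rw [hρval (i+1) (by omega)]
  -- length lower bound
  have hlen : ∀ i : ℕ, i + 1 ≤ n → Δ * (a i / F (a (i+1))) ≤ ρ (i+1) - σ i := by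
    intro i hi
    obtain ⟨⟨hσ0, hσρ⟩, hσy'⟩ := hσmem i hi
    have hσy : y (σ i) ≤ a i := hσy'
    obtain ⟨⟨hρ0, hρt₂'⟩, hρy'⟩ := hρmem (i+1) hi
    have hρy : a (i+1) ≤ y (ρ (i+1)) := hρy'
    have hbT : ρ (i+1) ≤ T := hρt₂'.trans ht₂T
    have hup : ∀ u, σ i < u → u < ρ (i+1) → y u ≤ a (i+1) := by
      intro u h1 h2
      exact (hρless (i+1) u ⟨hσ0.trans h1.le, h2.le.trans hρt₂'⟩ h2).le
    have hlo : ∀ u, σ i < u → u ≤ ρ (i+1) → a i ≤ y u :=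
      fun u h1 h2 => (hσlow i hi u h1 h2).le
    have hsp := hspeed (σ i) (ρ (i+1)) (a i) (a (i+1)) hσ0 hσρ hbT
      (hapos i) (hapos (i+1)).le hlo hup
    have hΔle : Δ ≤ (ρ (i+1) - σ i) * (F (a (i+1)) / a i) := by
      have h5 : a (i+1) - a i ≤ y (ρ (i+1)) - y (σ i) := by linarith
      have h6 := hastep i
      linarith
    have hFi : 0 < F (a (i+1)) := haF (i+1)
    have hai : 0 < a i := hapos i
    have h2 : Δ * a i ≤ (ρ (i+1) - σ i) * F (a (i+1)) := by
      have h3 := mul_le_mul_of_nonneg_right hΔle hai.le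
      rw [mul_assoc, div_mul_cancel₀ _ (ne_of_gt hai)] at h3
      exact h3
    rw [← mul_div_assoc]
    exact (div_le_iff₀ hFi).mpr h2
  -- sum of interval lengths is at most t₂
  have hsum : ∀ m : ℕ, m + 1 ≤ n →
      (∑ i ∈ Finset.range (m+1), (ρ (i+1) - σ i)) ≤ ρ (m+1) - σ 0 := by
    intro m
    induction m with
    | zero => intro _; simp
    | succ k ih =>
      intro hk
      rw [Finset.sum_range_succ]
      have h1 := ih (by omega)
      have h2 := hρσ k hk
      linarith
  have hn1 : 1 ≤ n := by
    by_contra h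
    push_neg at h
    interval_cases n
    · simp at hnpos
  have htotal : (∑ i ∈ Finset.range n, (ρ (i+1) - σ i)) ≤ t₂ := by
    obtain ⟨m, rfl⟩ : ∃ m, n = m + 1 := ⟨n - 1, by omega⟩
    have h1 := hsum m le_rfl
    have h2 : ρ (m+1) ≤ t₂ := (hρmem (m+1) le_rfl).1.2
    have h3 : 0 ≤ σ 0 := (hσmem 0 (by omega)).1.1
    linarith
  -- split the integral along the levels
  have hIsplit : (∑ i ∈ Finset.range n, ∫ s in a i..a (i+1), s / F s) = I' := by
    have h0 := intervalIntegral.sum_integral_adjacent_intervals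
      (μ := volume) (f := fun s => s / F s) (a := a) (n := n)
      (fun k hk => hgsub (a k) (a (k+1)) (haIcc k (by omega)) (haIcc (k+1) (by omega)))
    rw [ha0, han] at h0
    exact h0
  -- upper bound per piece
  have hpiece : ∀ i ∈ Finset.range n,
      (∫ s in a i..a (i+1), s / F s) ≤ Δ * (a (i+1) / F (a i)) := by
    intro i hi
    have hin : i + 1 ≤ n := Finset.mem_range.mp hi
    have hle : a i ≤ a (i+1) := hamono i (i+1) (by omega)
    have h1 : (∫ s in a i..a (i+1), s / F s) ≤ ∫ _s in a i..a (i+1), a (i+1) / F (a i) := by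
      refine intervalIntegral.integral_mono_on hle
        (hgsub (a i) (a (i+1)) (haIcc i (by omega)) (haIcc (i+1) hin))
        intervalIntegrable_const ?_
      intro s hs
      have hs0 : (0:ℝ) ≤ s := (hapos i).le.trans hs.1
      exact div_le_div₀ (hapos (i+1)).le hs.2 (haF i) (hF_mono (hapos i).le hs0 hs.1)
    rw [intervalIntegral.integral_const, smul_eq_mul] at h1
    calc (∫ s in a i..a (i+1), s / F s) ≤ (a (i+1) - a i) * (a (i+1) / F (a i)) := h1
    _ = Δ * (a (i+1) / F (a i)) := by rw [hastep i]
  -- per-term gap bound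
  have hterm : ∀ i ∈ Finset.range n,
      Δ * (a (i+1) / F (a i)) - Δ * (a i / F (a (i+1)))
        ≤ Δ * Δ / F B' + (Δ * C) * (1 / F (a i) - 1 / F (a (i+1))) := by
    intro i hi
    have hin : i + 1 ≤ n := Finset.mem_range.mp hi
    have hp : 0 < F (a i) := haF i
    have hq : 0 < F (a (i+1)) := haF (i+1)
    have hpq : F (a i) ≤ F (a (i+1)) :=
      hF_mono (hapos i).le (hapos (i+1)).le (hamono i (i+1) (by omega))
    have hBp : F B' ≤ F (a i) := hF_mono hB'pos.le (hapos i).le (haB' i)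
    have haiC : a i ≤ C := haC i (by omega)
    have hstep : a (i+1) = a i + Δ := by linarith [hastep i]
    nth_rewrite 1 [hstep]
    exact stmt0_aux Δ (a i) C (F (a i)) (F (a (i+1))) (F B') hΔpos (hapos i).le haiC
      hFB' hBp hpq
  -- sum of gap bounds
  have hgap : (∑ i ∈ Finset.range n,
      (Δ * Δ / F B' + (Δ * C) * (1 / F (a i) - 1 / F (a (i+1))))) ≤ Δ * K := by
    rw [Finset.sum_add_distrib, Finset.sum_const, Finset.card_range, ← Finset.mul_sum,
      Finset.sum_range_sub' (fun i => 1 / F (a i))]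
    simp only [ha0, han, nsmul_eq_mul]
    have h5 : (n:ℝ) * (Δ * Δ / F B') = Δ * (C - B') / F B' := by
      rw [hΔdef]
      field_simp
    have h6 : 0 < F C := hF_pos _ hC0
    have h7 : (Δ * C) * (1 / F B' - 1 / F C) ≤ Δ * C / F B' := by
      have h8 : 0 < 1 / F C := by positivity
      have h9 : (Δ * C) * (1 / F B' - 1 / F C) ≤ (Δ * C) * (1 / F B') :=
        mul_le_mul_of_nonneg_left (by linarith) (by positivity)
      calc (Δ * C) * (1 / F B' - 1 / F C) ≤ (Δ * C) * (1 / F B') := h9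
      _ = Δ * C / F B' := by ring
    rw [h5, hKdef]
    have hB'C : C - B' ≤ C := by linarith [hB'pos]
    have h10 : Δ * (C - B') / F B' ≤ Δ * C / F B' := by gcongr
    have h11 : Δ * (2 * C / F B') = Δ * C / F B' + Δ * C / F B' := by ring
    linarith
  -- combine everything
  have hfinal : I' ≤ t₂ + Δ * K := by
    have hA : I' ≤ ∑ i ∈ Finset.range n, Δ * (a (i+1) / F (a i)) := by
      rw [← hIsplit]
      exact Finset.sum_le_sum hpiece
    have hB2 : (∑ i ∈ Finset.range n, Δ * (a i / F (a (i+1)))) ≤ t₂ :=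
      le_trans (Finset.sum_le_sum (fun i hi => hlen i (Finset.mem_range.mp hi))) htotal
    have hC2 : (∑ i ∈ Finset.range n, Δ * (a (i+1) / F (a i)))
        - (∑ i ∈ Finset.range n, Δ * (a i / F (a (i+1)))) ≤ Δ * K := by
      rw [← Finset.sum_sub_distrib]
      exact le_trans (Finset.sum_le_sum hterm) hgap
    linarith
  linarith
end

section
/- With the notation of the previous statement, for every ε > 0, if t ≥ (C_d + d ln⁻ τ*(u) + 2 ln⁻ ε) τ*(u) for a suitable dimensional constant C_d, then sup_{s≥0} ‖S_{s,s+t}‖_{L¹₀ → L^∞₀} ≤ ε, where ln⁻ x = max(0, -ln x). -/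
/-- Quantitative `L¹₀ → L^∞₀` smallness (Proposition 5.2): there is a
dimensional constant `C_d` such that if `t ≥ (C_d + d ln⁻ τ + 2 ln⁻ ε) τ`
(with `τ` a dissipation/halving time of the advection-diffusion evolution),
then `‖S_{s,s+t}‖_{L¹₀→L^∞₀} ≤ ε`, i.e. `ninf(φ_{s+t}) ≤ ε · n1(φ_s)`
for every mean-zero solution `φ`. -/
theorem stmt_10 (d : ℕ) (c_d : ℝ) (hc : 1 ≤ c_d) :
    ∃ C_d : ℝ, ∀ (V : Type) (n1 n2 ninf : V → ℝ) (φ : ℝ → V) (τ : ℝ), 0 < τ →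
      (∀ v, 0 ≤ n1 v) → (∀ v, 0 ≤ n2 v) → (∀ v, 0 ≤ ninf v) →
      (∀ s t, 0 ≤ s → s ≤ t → n2 (φ t) ≤ n2 (φ s)) →
      (∀ s t, 0 ≤ s → s ≤ t → ninf (φ t) ≤ ninf (φ s)) →
      (∀ s, 0 ≤ s → ∀ t ∈ Set.Ioc (0:ℝ) 1,
        ninf (φ (s + t)) ≤ c_d * t ^ (-(d:ℝ)/4) * n2 (φ s)) →
      (∀ s, 0 ≤ s → ∀ t ∈ Set.Ioc (0:ℝ) 1,
        n2 (φ (s + t)) ≤ c_d * t ^ (-(d:ℝ)/4) * n1 (φ s)) →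
      (∀ s, 0 ≤ s → n2 (φ (s + τ)) ≤ (1/2) * n2 (φ s)) →
      ∀ ε, 0 < ε →
        ∀ t, (C_d + (d:ℝ) * max 0 (-Real.log τ) + 2 * max 0 (-Real.log ε)) * τ ≤ t →
        ∀ s, 0 ≤ s → ninf (φ (s + t)) ≤ ε * n1 (φ s) := by
  refine ⟨2 * Real.log c_d / Real.log 2 + 3, ?_⟩
  intro V n1 n2 ninf φ τ hτ hn1 hn2 hninf hmono2 hmonoinf hhyp1 hhyp2 hhalf ε hε t ht s hs
  set Lτ : ℝ := max 0 (-Real.log τ) with hLτ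
  set Lε : ℝ := max 0 (-Real.log ε) with hLε
  have hLτ0 : 0 ≤ Lτ := le_max_left _ _
  have hLε0 : 0 ≤ Lε := le_max_left _ _
  have hlogc : 0 ≤ Real.log c_d := Real.log_nonneg hc
  have hlog2 : 0 < Real.log 2 := Real.log_pos one_lt_two
  have h12 : (1/2:ℝ) < Real.log 2 := by
    have := Real.log_two_gt_d9; linarith
  set A : ℝ := 2 * Real.log c_d / Real.log 2 + d * Lτ + 2 * Lε with hA
  have hA0 : 0 ≤ A := by positivity
  set N : ℕ := ⌈A⌉₊ with hN
  set t₀ : ℝ := min τ 1 with ht₀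
  have ht₀pos : 0 < t₀ := lt_min hτ one_pos
  have ht₀mem : t₀ ∈ Set.Ioc (0:ℝ) 1 := ⟨ht₀pos, min_le_right _ _⟩
  have ht₀τ : t₀ ≤ τ := min_le_left _ _
  have hcpos : 0 < c_d := lt_of_lt_of_le one_pos hc
  have hrpos : 0 < t₀ ^ (-(d:ℝ)/4) := Real.rpow_pos_of_pos ht₀pos _
  -- iterate the halving
  have key : ∀ k : ℕ, n2 (φ (s + t₀ + k * τ)) ≤ (1/2)^k * (c_d * t₀ ^ (-(d:ℝ)/4) * n1 (φ s)) := by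
    intro k
    induction k with
    | zero => simpa using hhyp2 s hs t₀ ht₀mem
    | succ k ih =>
      have hs' : 0 ≤ s + t₀ + k * τ := by positivity
      have h := hhalf _ hs'
      have harg : s + t₀ + ((k:ℕ)+1 : ℕ) * τ = (s + t₀ + k * τ) + τ := by push_cast; ring
      rw [harg]
      calc n2 (φ (s + t₀ + k*τ + τ)) ≤ (1/2) * n2 (φ (s + t₀ + k*τ)) := h
        _ ≤ (1/2) * ((1/2)^k * (c_d * t₀ ^ (-(d:ℝ)/4) * n1 (φ s))) :=
            mul_le_mul_of_nonneg_left ih (by norm_num)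
        _ = (1/2)^(k+1) * (c_d * t₀ ^ (-(d:ℝ)/4) * n1 (φ s)) := by ring
  have hs2 : 0 ≤ s + t₀ + N * τ := by positivity
  have step3 : ninf (φ (s + t₀ + N*τ + t₀))
      ≤ c_d * t₀^(-(d:ℝ)/4) * ((1/2)^N * (c_d * t₀^(-(d:ℝ)/4) * n1 (φ s))) := by
    calc ninf (φ (s + t₀ + N*τ + t₀)) ≤ c_d * t₀^(-(d:ℝ)/4) * n2 (φ (s + t₀ + N*τ)) :=
          hhyp1 _ hs2 t₀ ht₀mem
      _ ≤ _ := mul_le_mul_of_nonneg_left (key N) (by positivity)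
  -- time comparison
  have hNA : (N:ℝ) ≤ A + 1 := (Nat.ceil_lt_add_one hA0).le
  have htineq : s + t₀ + N*τ + t₀ ≤ s + t := by
    have h2 : (A+3)*τ ≤ t := by
      have he : (A+3)*τ = (2 * Real.log c_d / Real.log 2 + 3 + (d:ℝ) * Lτ + 2 * Lε) * τ := by
        rw [hA]; ring
      rw [he]; exact ht
    nlinarith [hτ.le, ht₀τ, hNA]
  have step4 : ninf (φ (s + t)) ≤ ninf (φ (s + t₀ + N*τ + t₀)) :=
    hmonoinf _ _ (by positivity) htineq
  -- the constant is at most ε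
  have hlogt₀ : -Real.log t₀ = Lτ := by
    rcases le_or_gt τ 1 with h1 | h1
    · rw [ht₀, min_eq_left h1, hLτ, max_eq_right]
      simpa using Real.log_nonpos hτ.le h1
    · rw [ht₀, min_eq_right h1.le, hLτ, max_eq_left] <;>
        simp [neg_nonpos, (Real.log_pos h1).le]
  have hlogε : -Lε ≤ Real.log ε := by
    have : -Real.log ε ≤ Lε := le_max_right _ _
    linarith
  have hAN : A ≤ (N:ℝ) := Nat.le_ceil A
  have hNlog : 2*Real.log c_d + ((d:ℝ)/2)*Lτ + Lε ≤ (N:ℝ) * Real.log 2 := by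
    have hdiv : 2 * Real.log c_d / Real.log 2 * Real.log 2 = 2 * Real.log c_d :=
      div_mul_cancel₀ _ hlog2.ne'
    have hd0 : (0:ℝ) ≤ d := Nat.cast_nonneg d
    have hAlog : A * Real.log 2 = 2*Real.log c_d + ((d:ℝ)*Lτ + 2*Lε)*Real.log 2 := by
      rw [hA, add_mul, add_mul, hdiv]; ring
    have h1 : A * Real.log 2 ≤ (N:ℝ) * Real.log 2 :=
      mul_le_mul_of_nonneg_right hAN hlog2.le
    nlinarith [mul_nonneg hd0 hLτ0, mul_le_mul_of_nonneg_left h12.le (mul_nonneg hd0 hLτ0),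
      mul_le_mul_of_nonneg_left h12.le hLε0]
  have hK : c_d * t₀^(-(d:ℝ)/4) * ((1/2:ℝ)^N * (c_d * t₀^(-(d:ℝ)/4))) ≤ ε := by
    have hKpos : 0 < c_d * t₀^(-(d:ℝ)/4) * ((1/2:ℝ)^N * (c_d * t₀^(-(d:ℝ)/4))) := by positivity
    rw [← Real.exp_log hKpos, ← Real.exp_log hε, Real.exp_le_exp]
    have hlogK : Real.log (c_d * t₀^(-(d:ℝ)/4) * ((1/2:ℝ)^N * (c_d * t₀^(-(d:ℝ)/4))))
        = 2*Real.log c_d + 2*((-(d:ℝ)/4) * Real.log t₀) + (N:ℝ) * Real.log (1/2) := by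
      rw [Real.log_mul (by positivity) (by positivity),
          Real.log_mul (by positivity) (by positivity),
          Real.log_mul (by positivity) (by positivity),
          Real.log_mul (by positivity) (by positivity),
          Real.log_pow, Real.log_rpow ht₀pos]
      ring
    have hlog12 : Real.log (1/2:ℝ) = -Real.log 2 := by
      rw [one_div, Real.log_inv]
    rw [hlogK, hlog12]
    have : 2*((-(d:ℝ)/4) * Real.log t₀) = ((d:ℝ)/2) * Lτ := by
      rw [← hlogt₀]; ring
    rw [this]
    linarith
  calc ninf (φ (s + t)) ≤ ninf (φ (s + t₀ + N*τ + t₀)) := step4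
    _ ≤ c_d * t₀^(-(d:ℝ)/4) * ((1/2)^N * (c_d * t₀^(-(d:ℝ)/4) * n1 (φ s))) := step3
    _ = (c_d * t₀^(-(d:ℝ)/4) * ((1/2:ℝ)^N * (c_d * t₀^(-(d:ℝ)/4)))) * n1 (φ s) := by ring
    _ ≤ ε * n1 (φ s) := mul_le_mul_of_nonneg_right hK (hn1 _)
end
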